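/- Let k be a field and n, r ≥ 1. Regard M := (k[π]/(π^r))^n as an nr-dimensional k-vector space with basis x_j^{(i)} := π^i e_j for 1 ≤ j ≤ n and 0 ≤ i ≤ r-1, where e_1, ..., e_n is the standard basis. Order the basis vectors x_j^{(i)} lexicographically by (i, j) (first by the level i, then by the index j), and let 𝓕 be the complete flag of k-subspaces of M whose members are the spans of the initial segments of this ordered basis. Then the subgroup of GL_n(k[π]/(π^r)), acting k-linearly on M in the natural way, consisting of those g that stabilize every subspace in 𝓕, is exactly the set of invertible upper triangular matrices g over k[π]/(π^r) all of whose entries lie in the subfield k ⊆ k[π]/(π^r) of constants; equivalently, it is the image of the group of invertible upper triangular matrices of GL_n(k) under the inclusion k ↪ k[π]/(π^r). -/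

import Mathlib

open Polynomial Matrix in
private lemma flag_aux {k R : Type*} [Field k] [CommRing R] [Algebra k R]
    (hinj : Function.Injective (algebraMap k R)) (n r : ℕ) (hn : 1 ≤ n) (hr : 1 ≤ r)
    (π : R) (G : Matrix (Fin n) (Fin n) R) :
    (∀ m : ℕ, ∀ v ∈ Submodule.span k
        {w : Fin n → R | ∃ (j : Fin n) (i : Fin r), (i : ℕ) * n + (j : ℕ) < m ∧
            w = π ^ (i : ℕ) • (Pi.single j (1 : R) : Fin n → R)},
      G.mulVec v ∈ Submodule.span k
          {w : Fin n → R | ∃ (j : Fin n) (i : Fin r), (i : ℕ) * n + (j : ℕ) < m ∧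
              w = π ^ (i : ℕ) • (Pi.single j (1 : R) : Fin n → R)}) ↔
      ((∀ a b : Fin n, b < a → G a b = 0) ∧
        ∀ a b : Fin n, ∃ c : k, G a b = algebraMap k R c) := by
  classical
  constructor
  · intro H
    have col : ∀ b a : Fin n, (b < a → G a b = 0) ∧ ∃ c : k, G a b = algebraMap k R c := by
      intro b
      have hgen : (Pi.single b (1:R)) ∈ Submodule.span k
          {w : Fin n → R | ∃ (j : Fin n) (i : Fin r), (i : ℕ) * n + (j : ℕ) < (b : ℕ) + 1 ∧
            w = π ^ (i : ℕ) • (Pi.single j (1 : R) : Fin n → R)} := by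
        apply Submodule.subset_span
        exact ⟨b, ⟨0, hr⟩, by simp, by simp⟩
      have hmem := H ((b : ℕ) + 1) _ hgen
      have key : ∀ v ∈ Submodule.span k
          {w : Fin n → R | ∃ (j : Fin n) (i : Fin r), (i : ℕ) * n + (j : ℕ) < (b : ℕ) + 1 ∧
            w = π ^ (i : ℕ) • (Pi.single j (1 : R) : Fin n → R)},
          ∀ a : Fin n, ((b : ℕ) < (a : ℕ) → v a = 0) ∧ ∃ c : k, v a = algebraMap k R c := by
        intro v hv
        induction hv using Submodule.span_induction with
        | mem w hw =>
          obtain ⟨j, i, hlt, rfl⟩ := hw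
          have hi : (i : ℕ) = 0 := by
            by_contra h
            have : n ≤ (i : ℕ) * n := Nat.le_mul_of_pos_left n (by omega)
            omega
          have hj : (j : ℕ) ≤ (b : ℕ) := by omega
          intro a
          constructor
          · intro hba
            have hne : a ≠ j := by
              intro h; subst h; omega
            simp [hi, Pi.single_eq_of_ne hne]
          · by_cases h : a = j
            · exact ⟨1, by simp [h, hi]⟩
            · exact ⟨0, by simp [hi, Pi.single_eq_of_ne h]⟩
        | zero => intro a; exact ⟨fun _ => rfl, 0, by simp⟩
        | add x y _ _ hx hy =>
          intro a
          obtain ⟨hx0, cx, hcx⟩ := hx a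
          obtain ⟨hy0, cy, hcy⟩ := hy a
          refine ⟨fun h => by simp [Pi.add_apply, hx0 h, hy0 h], cx + cy, ?_⟩
          simp [Pi.add_apply, hcx, hcy]
        | smul t x _ hx =>
          intro a
          obtain ⟨hx0, cx, hcx⟩ := hx a
          refine ⟨fun h => by simp [Pi.smul_apply, hx0 h], t * cx, ?_⟩
          rw [Pi.smul_apply, hcx, Algebra.smul_def]
          exact (map_mul (algebraMap k R) t cx).symm
      intro a
      have h2 := key _ hmem a
      rw [Matrix.mulVec_single] at h2
      simpa using h2
    exact ⟨fun a b hba => (col b a).1 hba, fun a b => (col b a).2⟩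
  · rintro ⟨ht, hc⟩ m v hv
    choose c hcc using hc
    induction hv using Submodule.span_induction with
    | mem w hw =>
      obtain ⟨j, i, hlt, rfl⟩ := hw
      have heq : G.mulVec (π ^ (i : ℕ) • (Pi.single j (1 : R) : Fin n → R)) =
          ∑ a : Fin n, c a j • (π ^ (i : ℕ) • (Pi.single a (1 : R) : Fin n → R)) := by
        funext a'
        rw [Matrix.mulVec_smul, Pi.smul_apply, Matrix.mulVec_single]
        rw [Finset.sum_apply]
        rw [Finset.sum_eq_single a']
        · simp only [Pi.smul_apply, Pi.single_eq_same, smul_eq_mul, mul_one]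
          simp only [MulOpposite.op_one, one_smul, Matrix.col_apply]
          rw [hcc a' j, Algebra.smul_def, mul_comm]
        · intro b _ hb
          simp [Pi.single_eq_of_ne (Ne.symm hb)]
        · intro h; exact absurd (Finset.mem_univ a') h
      rw [heq]
      apply Submodule.sum_mem
      intro a _
      by_cases hja : (a : ℕ) ≤ (j : ℕ)
      · apply Submodule.smul_mem
        apply Submodule.subset_span
        exact ⟨a, i, by omega, rfl⟩
      · have hja' : j < a := by omega
        have hz : c a j = 0 := by
          apply hinj
          rw [← hcc a j, ht a j hja', map_zero]
        simp [hz]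
    | zero => rw [Matrix.mulVec_zero]; exact Submodule.zero_mem _
    | add x y _ _ hx hy => rw [Matrix.mulVec_add]; exact Submodule.add_mem _ hx hy
    | smul t x _ hx => rw [Matrix.mulVec_smul]; exact Submodule.smul_mem _ _ hx


open Polynomial

/-- The stabilizer in `GL_n(k[π]/(π^r))` of the complete `k`-flag on `(k[π]/(π^r))^n`
spanned by initial segments of the basis `x_j^{(i)} = π^i e_j` ordered lexicographically
by `(i,j)` consists exactly of the invertible upper triangular matrices all of whose
entries lie in the subfield `k` of constants; equivalently, it is the image of the group
of invertible upper triangular matrices of `GL_n(k)`. -/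
theorem flag_stabilizer_lex_ij (k : Type*) [Field k] (n r : ℕ) (hn : 1 ≤ n) (hr : 1 ≤ r)
    (g : (Matrix (Fin n) (Fin n) (AdjoinRoot (X ^ r : k[X])))ˣ) :
    ((∀ m : ℕ, ∀ v ∈ Submodule.span k
        {w : Fin n → AdjoinRoot (X ^ r : k[X]) |
          ∃ (j : Fin n) (i : Fin r), (i : ℕ) * n + (j : ℕ) < m ∧
            w = AdjoinRoot.root (X ^ r : k[X]) ^ (i : ℕ) •
                  Pi.single j (1 : AdjoinRoot (X ^ r : k[X]))},
      (g : Matrix (Fin n) (Fin n) (AdjoinRoot (X ^ r : k[X]))).mulVec v ∈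
        Submodule.span k
          {w : Fin n → AdjoinRoot (X ^ r : k[X]) |
            ∃ (j : Fin n) (i : Fin r), (i : ℕ) * n + (j : ℕ) < m ∧
              w = AdjoinRoot.root (X ^ r : k[X]) ^ (i : ℕ) •
                    Pi.single j (1 : AdjoinRoot (X ^ r : k[X]))}) ↔
      ((∀ a b : Fin n, b < a →
          (g : Matrix (Fin n) (Fin n) (AdjoinRoot (X ^ r : k[X]))) a b = 0) ∧
        ∀ a b : Fin n, ∃ c : k,
          (g : Matrix (Fin n) (Fin n) (AdjoinRoot (X ^ r : k[X]))) a b =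
            AdjoinRoot.of (X ^ r : k[X]) c)) ∧
    ((∀ m : ℕ, ∀ v ∈ Submodule.span k
        {w : Fin n → AdjoinRoot (X ^ r : k[X]) |
          ∃ (j : Fin n) (i : Fin r), (i : ℕ) * n + (j : ℕ) < m ∧
            w = AdjoinRoot.root (X ^ r : k[X]) ^ (i : ℕ) •
                  Pi.single j (1 : AdjoinRoot (X ^ r : k[X]))},
      (g : Matrix (Fin n) (Fin n) (AdjoinRoot (X ^ r : k[X]))).mulVec v ∈
        Submodule.span k
          {w : Fin n → AdjoinRoot (X ^ r : k[X]) |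
            ∃ (j : Fin n) (i : Fin r), (i : ℕ) * n + (j : ℕ) < m ∧
              w = AdjoinRoot.root (X ^ r : k[X]) ^ (i : ℕ) •
                    Pi.single j (1 : AdjoinRoot (X ^ r : k[X]))}) ↔
      (∃ h : (Matrix (Fin n) (Fin n) k)ˣ,
        (∀ a b : Fin n, b < a → (h : Matrix (Fin n) (Fin n) k) a b = 0) ∧
          (g : Matrix (Fin n) (Fin n) (AdjoinRoot (X ^ r : k[X]))) =
            (h : Matrix (Fin n) (Fin n) k).map (AdjoinRoot.of (X ^ r : k[X])))) := by
  classical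
  have hdeg : (X ^ r : k[X]).degree ≠ 0 := by
    rw [degree_pow, degree_X]; simp; omega
  have hinj' : Function.Injective (AdjoinRoot.of (X ^ r : k[X])) :=
    AdjoinRoot.of.injective_of_degree_ne_zero hdeg
  have hinj : Function.Injective (algebraMap k (AdjoinRoot (X ^ r : k[X]))) := by
    rw [AdjoinRoot.algebraMap_eq]; exact hinj'
  have h1 := flag_aux hinj n r hn hr (AdjoinRoot.root (X ^ r : k[X]))
      (g : Matrix (Fin n) (Fin n) (AdjoinRoot (X ^ r : k[X])))
  rw [AdjoinRoot.algebraMap_eq] at h1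
  refine ⟨h1, h1.trans ?_⟩
  constructor
  · rintro ⟨ht, hc⟩
    choose c hcc using hc
    set A : Matrix (Fin n) (Fin n) k := Matrix.of c with hA
    have hgA : (g : Matrix (Fin n) (Fin n) (AdjoinRoot (X ^ r : k[X]))) =
        A.map (AdjoinRoot.of (X ^ r : k[X])) := by
      ext a b; exact hcc a b
    have hdet : IsUnit ((g : Matrix (Fin n) (Fin n) (AdjoinRoot (X ^ r : k[X]))).det) :=
      (Matrix.isUnit_iff_isUnit_det _).mp g.isUnit
    have hdetA : A.det ≠ 0 := by
      intro h0
      have hmd : (A.map ⇑(AdjoinRoot.of (X ^ r : k[X]))).det =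
          (AdjoinRoot.of (X ^ r : k[X])) A.det := ((AdjoinRoot.of (X ^ r : k[X])).map_det A).symm
      rw [hgA, hmd, h0, map_zero] at hdet
      have h01 : (0 : AdjoinRoot (X ^ r : k[X])) ≠ 1 := by
        intro h
        exact zero_ne_one (α := k) (hinj' (by rw [map_zero, map_one]; exact h))
      exact h01 (isUnit_zero_iff.mp hdet)
    have hAunit : IsUnit A :=
      (Matrix.isUnit_iff_isUnit_det _).mpr (isUnit_iff_ne_zero.mpr hdetA)
    obtain ⟨u, hu⟩ := hAunit
    refine ⟨u, ?_, by rw [hgA, hu]⟩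
    intro a b hba
    apply hinj'
    rw [map_zero, show (u : Matrix (Fin n) (Fin n) k) a b = c a b from by rw [hu]; rfl,
      ← hcc a b, ht a b hba]
  · rintro ⟨h, hht, hmap⟩
    constructor
    · intro a b hba
      rw [hmap]; simp [Matrix.map_apply, hht a b hba]
    · intro a b
      exact ⟨(h : Matrix (Fin n) (Fin n) k) a b, by rw [hmap]; simp [Matrix.map_apply]⟩
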